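/- Let I be an ideal of a commutative ring R. Then I is a nil clean ideal of R if and only if I ∩ J(R) is nil and a - a^2 ∈ I ∩ J(R) for every a ∈ I. -/

import Mathlib

def IsNilCleanIdeal {R : Type*} [CommRing R] (I : Ideal R) : Prop :=
  ∀ x ∈ I, ∃ e n : R, IsIdempotentElem e ∧ IsNilpotent n ∧ x = e + n

lemma nilpotent_mem_jacobson_bot {R : Type*} [CommRing R] {n : R} (hn : IsNilpotent n) :
    n ∈ (⊥ : Ideal R).jacobson :=
  Ideal.radical_le_jacobson (mem_nilradical.mpr hn)

lemma exists_idem_nilp_of_nilpotent_sub_sq {R : Type*} [CommRing R] {x : R}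
    (h : IsNilpotent (x - x ^ 2)) :
    ∃ e n : R, IsIdempotentElem e ∧ IsNilpotent n ∧ x = e + n := by
  set f := Ideal.Quotient.mk (nilradical R) with hf
  have hker : ∀ y ∈ RingHom.ker f, IsNilpotent y := by
    intro y hy
    rwa [RingHom.mem_ker, Ideal.Quotient.eq_zero_iff_mem, mem_nilradical] at hy
  have hidem : IsIdempotentElem (f x) := by
    have h0 : f (x - x ^ 2) = 0 :=
      Ideal.Quotient.eq_zero_iff_mem.mpr (mem_nilradical.mpr h)
    have h1 : f x - f x * f x = 0 := by
      rw [← map_mul, ← pow_two, ← map_sub, h0]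
    unfold IsIdempotentElem
    linear_combination -h1
  obtain ⟨e, he, hfe⟩ :=
    exists_isIdempotentElem_eq_of_ker_isNilpotent f hker (f x) ⟨x, rfl⟩ hidem
  refine ⟨e, x - e, he, ?_, by ring⟩
  refine hker _ ?_
  rw [RingHom.mem_ker, map_sub, hfe, sub_self]

/-- An ideal `I` of a commutative ring is nil clean iff `I ∩ J(R)` is nil and
`I/(I ∩ J(R))` is Boolean. -/
theorem nilCleanIdeal_iff_inter_jacobson {R : Type*} [CommRing R] (I : Ideal R) :
    IsNilCleanIdeal I ↔
      (∀ x ∈ I ⊓ (⊥ : Ideal R).jacobson, IsNilpotent x) ∧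
        ∀ a ∈ I, a - a ^ 2 ∈ I ⊓ (⊥ : Ideal R).jacobson := by
  constructor
  · intro hI
    constructor
    · rintro x ⟨hxI, hxJ⟩
      obtain ⟨e, n, he, hn, rfl⟩ := hI x hxI
      have heJ : e ∈ (⊥ : Ideal R).jacobson := by
        have : (e + n) - n ∈ (⊥ : Ideal R).jacobson :=
          Ideal.sub_mem _ hxJ (nilpotent_mem_jacobson_bot hn)
        simpa using this
      have he0 : e = 0 := by
        have hu : IsUnit (e * (-1) + 1) := Ideal.mem_jacobson_bot.mp heJ (-1)
        have h0 : e * (e * (-1) + 1) = 0 := by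
          linear_combination -he.eq
        obtain ⟨u, hu⟩ := hu
        calc e = e * (↑u * ↑u⁻¹) := by simp
          _ = (e * ↑u) * ↑u⁻¹ := by ring
          _ = 0 := by rw [hu, h0, zero_mul]
      rw [he0, zero_add]
      exact hn
    · intro a ha
      obtain ⟨e, n, he, hn, rfl⟩ := hI a ha
      have hnil : IsNilpotent ((e + n) - (e + n) ^ 2) := by
        have heq : (e + n) - (e + n) ^ 2 = n * (1 - 2 * e - n) := by
          linear_combination -he.eq
        rw [heq]
        exact (Commute.all n _).isNilpotent_mul_right hn
      exact ⟨I.sub_mem ha (by rw [pow_two]; exact I.mul_mem_left _ ha),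
        nilpotent_mem_jacobson_bot hnil⟩
  · rintro ⟨hnil, hb⟩ x hx
    exact exists_idem_nilp_of_nilpotent_sub_sq (hnil _ (hb x hx))
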